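/- For every q ∈ ℂ with 0 < |q| < 1, the element W₀ := φ(q)·(xyxy + xwxw + zyzy + zwzw + yxyx + wxwx + yzyz + wzwz) + ψ(q)·(xyzw + wzyx) is central in the algebra A₀, i.e. W₀·r = r·W₀ for every r ∈ A₀. (W₀ is the worldsheet superpotential of the generalized mirror of the elliptic orbifold ℙ¹_{2,2,2,2} with Kähler parameter q_orb = q⁴.) -/

import Mathlib

open Complex

/-- Generators `e₁ = g 0`, `e₂ = g 1`, `x = g 2`, `y = g 3`, `z = g 4`, `w = g 5`
of the free noncommutative unital `ℂ`-algebra on six generators. -/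
noncomputable def g (i : Fin 6) : FreeAlgebra ℂ (Fin 6) := FreeAlgebra.ι ℂ i

/-- The defining relations of the quiver algebra `A₀` (the noncommutative crepant
resolution of the conifold): `e₁ + e₂ = 1`, `e₁e₂ = e₂e₁ = 0`, `e₁² = e₁`,
`e₂² = e₂`, `x = e₁xe₂`, `z = e₁ze₂`, `y = e₂ye₁`, `w = e₂we₁`, together with the
cyclic-derivative relations `xyz = zyx`, `yzw = wzy`, `zwx = xwz`, `wxy = yxw` of
the potential `Φ₀ = xyzw − wzyx`. -/
inductive ConifoldRel : FreeAlgebra ℂ (Fin 6) → FreeAlgebra ℂ (Fin 6) → Prop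
  | unit : ConifoldRel (g 0 + g 1) 1
  | orth₁ : ConifoldRel (g 0 * g 1) 0
  | orth₂ : ConifoldRel (g 1 * g 0) 0
  | idem₁ : ConifoldRel (g 0 * g 0) (g 0)
  | idem₂ : ConifoldRel (g 1 * g 1) (g 1)
  | path_x : ConifoldRel (g 2) (g 0 * g 2 * g 1)
  | path_z : ConifoldRel (g 4) (g 0 * g 4 * g 1)
  | path_y : ConifoldRel (g 3) (g 1 * g 3 * g 0)
  | path_w : ConifoldRel (g 5) (g 1 * g 5 * g 0)
  | pot_w : ConifoldRel (g 2 * g 3 * g 4) (g 4 * g 3 * g 2)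
  | pot_x : ConifoldRel (g 3 * g 4 * g 5) (g 5 * g 4 * g 3)
  | pot_y : ConifoldRel (g 4 * g 5 * g 2) (g 2 * g 5 * g 4)
  | pot_z : ConifoldRel (g 5 * g 2 * g 3) (g 3 * g 2 * g 5)

/-- The algebra `A₀`, the quotient of the free algebra on `e₁, e₂, x, y, z, w` by the
two-sided ideal generated by the above relations. -/
abbrev ConifoldAlg := RingQuot ConifoldRel

/-- The generator `x` of `A₀`. -/
noncomputable def ax : ConifoldAlg := RingQuot.mkAlgHom ℂ ConifoldRel (g 2)

/-- The generator `y` of `A₀`. -/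
noncomputable def ay : ConifoldAlg := RingQuot.mkAlgHom ℂ ConifoldRel (g 3)

/-- The generator `z` of `A₀`. -/
noncomputable def az : ConifoldAlg := RingQuot.mkAlgHom ℂ ConifoldRel (g 4)

/-- The generator `w` of `A₀`. -/
noncomputable def aw : ConifoldAlg := RingQuot.mkAlgHom ℂ ConifoldRel (g 5)

/-- The open Gromov–Witten generating series `φ(q)` of `ℙ¹_{2,2,2,2}`. -/
noncomputable def phiSeries (q : ℂ) : ℂ :=
  (∑' p : ℕ × ℕ, ((4 * (p.1 : ℂ) + 1)) * q ^ ((4 * p.1 + 1) * (4 * p.2 + 1)))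
    + ∑' p : ℕ × ℕ, ((4 * (p.1 : ℂ) + 3)) * q ^ ((4 * p.1 + 3) * (4 * p.2 + 3))

/-- The open Gromov–Witten generating series `ψ(q)` of `ℙ¹_{2,2,2,2}`. -/
noncomputable def psiSeries (q : ℂ) : ℂ :=
  ∑' p : ℕ × ℕ, (((p.1 : ℂ) + (p.2 : ℂ) + 1)) * q ^ ((4 * p.1 + 1) * (4 * p.2 + 3))

/-- The worldsheet superpotential
`W₀ = φ(q)·((xy)² + (xw)² + (zy)² + (zw)² + (yx)² + (wx)² + (yz)² + (wz)²)
      + ψ(q)·(xyzw + wzyx)`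
of the generalized mirror of `ℙ¹_{2,2,2,2}` with Kähler parameter `q_orb = q⁴`. -/
noncomputable def W0 (q : ℂ) : ConifoldAlg :=
  algebraMap ℂ ConifoldAlg (phiSeries q) *
      (ax * ay * ax * ay + ax * aw * ax * aw + az * ay * az * ay + az * aw * az * aw
        + ay * ax * ay * ax + aw * ax * aw * ax + ay * az * ay * az + aw * az * aw * az)
    + algebraMap ℂ ConifoldAlg (psiSeries q) * (ax * ay * az * aw + aw * az * ay * ax)

section Aux

noncomputable def cmk : FreeAlgebra ℂ (Fin 6) →ₐ[ℂ] ConifoldAlg := RingQuot.mkAlgHom ℂ ConifoldRel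

noncomputable def e1A : ConifoldAlg := cmk (g 0)
noncomputable def e2A : ConifoldAlg := cmk (g 1)

lemma crel {a b : FreeAlgebra ℂ (Fin 6)} (h : ConifoldRel a b) : cmk a = cmk b :=
  RingQuot.mkAlgHom_rel ℂ h

-- base relations in the quotient
lemma h11 : e1A * e1A = e1A := by
  simpa [e1A, map_mul] using crel ConifoldRel.idem₁
lemma h22 : e2A * e2A = e2A := by
  simpa [e2A, map_mul] using crel ConifoldRel.idem₂
lemma h12 : e1A * e2A = 0 := by
  simpa [e1A, e2A, map_mul] using crel ConifoldRel.orth₁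
lemma h21 : e2A * e1A = 0 := by
  simpa [e1A, e2A, map_mul] using crel ConifoldRel.orth₂
lemma hx : ax = e1A * ax * e2A := by
  simpa [e1A, e2A, ax, cmk, map_mul] using crel ConifoldRel.path_x
lemma hz : az = e1A * az * e2A := by
  simpa [e1A, e2A, az, cmk, map_mul] using crel ConifoldRel.path_z
lemma hy : ay = e2A * ay * e1A := by
  simpa [e1A, e2A, ay, cmk, map_mul] using crel ConifoldRel.path_y
lemma hw : aw = e2A * aw * e1A := by
  simpa [e1A, e2A, aw, cmk, map_mul] using crel ConifoldRel.path_w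
lemma pw : ax * ay * az = az * ay * ax := by
  simpa [ax, ay, az, cmk, map_mul] using crel ConifoldRel.pot_w
lemma px : ay * az * aw = aw * az * ay := by
  simpa [ay, az, aw, cmk, map_mul] using crel ConifoldRel.pot_x
lemma py : az * aw * ax = ax * aw * az := by
  simpa [az, aw, ax, cmk, map_mul] using crel ConifoldRel.pot_y
lemma pz : aw * ax * ay = ay * ax * aw := by
  simpa [aw, ax, ay, cmk, map_mul] using crel ConifoldRel.pot_z

end Aux
section Aux2

-- idempotent sandwich lemmas
lemma E1x : e1A * ax = ax := by
  conv_lhs => rw [hx]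
  rw [← mul_assoc, ← mul_assoc, h11, ← hx]
lemma xE2 : ax * e2A = ax := by
  conv_lhs => rw [hx]
  rw [mul_assoc, mul_assoc, h22, ← mul_assoc, ← hx]
lemma xE1 : ax * e1A = 0 := by
  conv_lhs => rw [hx]
  rw [mul_assoc, h21, mul_zero]
lemma E2x : e2A * ax = 0 := by
  conv_lhs => rw [hx]
  rw [← mul_assoc, ← mul_assoc, h21, zero_mul, zero_mul]
lemma E1z : e1A * az = az := by
  conv_lhs => rw [hz]
  rw [← mul_assoc, ← mul_assoc, h11, ← hz]
lemma zE2 : az * e2A = az := by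
  conv_lhs => rw [hz]
  rw [mul_assoc, mul_assoc, h22, ← mul_assoc, ← hz]
lemma zE1 : az * e1A = 0 := by
  conv_lhs => rw [hz]
  rw [mul_assoc, h21, mul_zero]
lemma E2z : e2A * az = 0 := by
  conv_lhs => rw [hz]
  rw [← mul_assoc, ← mul_assoc, h21, zero_mul, zero_mul]
lemma E2y : e2A * ay = ay := by
  conv_lhs => rw [hy]
  rw [← mul_assoc, ← mul_assoc, h22, ← hy]
lemma yE1 : ay * e1A = ay := by
  conv_lhs => rw [hy]
  rw [mul_assoc, mul_assoc, h11, ← mul_assoc, ← hy]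
lemma yE2 : ay * e2A = 0 := by
  conv_lhs => rw [hy]
  rw [mul_assoc, h12, mul_zero]
lemma E1y : e1A * ay = 0 := by
  conv_lhs => rw [hy]
  rw [← mul_assoc, ← mul_assoc, h12, zero_mul, zero_mul]
lemma E2w : e2A * aw = aw := by
  conv_lhs => rw [hw]
  rw [← mul_assoc, ← mul_assoc, h22, ← hw]
lemma wE1 : aw * e1A = aw := by
  conv_lhs => rw [hw]
  rw [mul_assoc, mul_assoc, h11, ← mul_assoc, ← hw]
lemma wE2 : aw * e2A = 0 := by
  conv_lhs => rw [hw]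
  rw [mul_assoc, h12, mul_zero]
lemma E1w : e1A * aw = 0 := by
  conv_lhs => rw [hw]
  rw [← mul_assoc, ← mul_assoc, h12, zero_mul, zero_mul]

-- zero products
lemma zxx : ax * ax = 0 := by nth_rewrite 2 [← E1x]; rw [← mul_assoc, xE1, zero_mul]
lemma zxz : ax * az = 0 := by rw [← E1z, ← mul_assoc, xE1, zero_mul]
lemma zzx : az * ax = 0 := by rw [← E1x, ← mul_assoc, zE1, zero_mul]
lemma zzz : az * az = 0 := by nth_rewrite 2 [← E1z]; rw [← mul_assoc, zE1, zero_mul]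
lemma zyy : ay * ay = 0 := by nth_rewrite 2 [← E2y]; rw [← mul_assoc, yE2, zero_mul]
lemma zyw : ay * aw = 0 := by rw [← E2w, ← mul_assoc, yE2, zero_mul]
lemma zwy : aw * ay = 0 := by rw [← E2y, ← mul_assoc, wE2, zero_mul]
lemma zww : aw * aw = 0 := by nth_rewrite 2 [← E2w]; rw [← mul_assoc, wE2, zero_mul]

-- applied (right-associated) zero products
lemma zxx' (t : ConifoldAlg) : ax * (ax * t) = 0 := by rw [← mul_assoc, zxx, zero_mul]
lemma zxz' (t : ConifoldAlg) : ax * (az * t) = 0 := by rw [← mul_assoc, zxz, zero_mul]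
lemma zzx' (t : ConifoldAlg) : az * (ax * t) = 0 := by rw [← mul_assoc, zzx, zero_mul]
lemma zzz' (t : ConifoldAlg) : az * (az * t) = 0 := by rw [← mul_assoc, zzz, zero_mul]
lemma zyy' (t : ConifoldAlg) : ay * (ay * t) = 0 := by rw [← mul_assoc, zyy, zero_mul]
lemma zyw' (t : ConifoldAlg) : ay * (aw * t) = 0 := by rw [← mul_assoc, zyw, zero_mul]
lemma zwy' (t : ConifoldAlg) : aw * (ay * t) = 0 := by rw [← mul_assoc, zwy, zero_mul]
lemma zww' (t : ConifoldAlg) : aw * (aw * t) = 0 := by rw [← mul_assoc, zww, zero_mul]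

-- applied potential relations
lemma pw' (t : ConifoldAlg) : ax * (ay * (az * t)) = az * (ay * (ax * t)) := by
  simp only [← mul_assoc]; rw [pw]
lemma px' (t : ConifoldAlg) : ay * (az * (aw * t)) = aw * (az * (ay * t)) := by
  simp only [← mul_assoc]; rw [px]
lemma py' (t : ConifoldAlg) : az * (aw * (ax * t)) = ax * (aw * (az * t)) := by
  simp only [← mul_assoc]; rw [py]
lemma pz' (t : ConifoldAlg) : aw * (ax * (ay * t)) = ay * (ax * (aw * t)) := by
  simp only [← mul_assoc]; rw [pz]
lemma pwr : ax * (ay * az) = az * (ay * ax) := by rw [← mul_assoc, pw, mul_assoc]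
lemma pxr : ay * (az * aw) = aw * (az * ay) := by rw [← mul_assoc, px, mul_assoc]
lemma pyr : az * (aw * ax) = ax * (aw * az) := by rw [← mul_assoc, py, mul_assoc]
lemma pzr : aw * (ax * ay) = ay * (ax * aw) := by rw [← mul_assoc, pz, mul_assoc]

end Aux2
section Aux3

-- applied left idempotent actions
lemma E1x' (t : ConifoldAlg) : e1A * (ax * t) = ax * t := by rw [← mul_assoc, E1x]
lemma E1z' (t : ConifoldAlg) : e1A * (az * t) = az * t := by rw [← mul_assoc, E1z]
lemma E1y' (t : ConifoldAlg) : e1A * (ay * t) = 0 := by rw [← mul_assoc, E1y, zero_mul]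
lemma E1w' (t : ConifoldAlg) : e1A * (aw * t) = 0 := by rw [← mul_assoc, E1w, zero_mul]
lemma E2y' (t : ConifoldAlg) : e2A * (ay * t) = ay * t := by rw [← mul_assoc, E2y]
lemma E2w' (t : ConifoldAlg) : e2A * (aw * t) = aw * t := by rw [← mul_assoc, E2w]
lemma E2x' (t : ConifoldAlg) : e2A * (ax * t) = 0 := by rw [← mul_assoc, E2x, zero_mul]
lemma E2z' (t : ConifoldAlg) : e2A * (az * t) = 0 := by rw [← mul_assoc, E2z, zero_mul]

-- the two pieces of the superpotential
noncomputable def Ssum : ConifoldAlg :=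
  ax * ay * ax * ay + ax * aw * ax * aw + az * ay * az * ay + az * aw * az * aw
    + ay * ax * ay * ax + aw * ax * aw * ax + ay * az * ay * az + aw * az * aw * az

noncomputable def Psum : ConifoldAlg := ax * ay * az * aw + aw * az * ay * ax

-- five-letter word identities
lemma wCx : az * (ay * (az * (ay * ax))) = ax * (ay * (az * (ay * az))) := by
  rw [← pwr, ← pw']
lemma wDx : az * (aw * (az * (aw * ax))) = ax * (aw * (az * (aw * az))) := by
  rw [pyr, py']
lemma wPx : ax * (ay * (az * (aw * ax))) = ax * (aw * (az * (ay * ax))) := by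
  rw [px']
lemma wB'y : aw * (ax * (aw * (ax * ay))) = ay * (ax * (aw * (ax * aw))) := by
  rw [pzr, pz']
lemma wD'y : aw * (az * (aw * (az * ay))) = ay * (az * (aw * (az * aw))) := by
  rw [← pxr, ← px']
lemma wPy : aw * (az * (ay * (ax * ay))) = ay * (ax * (ay * (az * aw))) := by
  rw [← px', py', ← pxr]
lemma wAz : ax * (ay * (ax * (ay * az))) = az * (ay * (ax * (ay * ax))) := by
  rw [pwr, pw']
lemma wBz : ax * (aw * (ax * (aw * az))) = az * (aw * (ax * (aw * ax))) := by
  rw [← pyr, ← py']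
lemma wPz : ax * (ay * (az * (aw * az))) = az * (aw * (az * (ay * ax))) := by
  rw [px', ← py', pwr]
lemma wA'w : ay * (ax * (ay * (ax * aw))) = aw * (ax * (ay * (ax * ay))) := by
  rw [← pzr, ← pz']
lemma wC'w : ay * (az * (ay * (az * aw))) = aw * (az * (ay * (az * ay))) := by
  rw [pxr, px']
lemma wPw : aw * (az * (ay * (ax * aw))) = aw * (ax * (ay * (az * aw))) := by
  rw [← pw']

-- commutation of the two pieces with each generator
lemma Sx : Ssum * ax = ax * Ssum := by
  simp only [Ssum, add_mul, mul_add, mul_assoc, zxx', zxz', zzx', zzz', zyy', zyw', zwy', zww', zxx, zxz, zzx, zzz, zyy, zyw, zwy, zww, mul_zero, zero_mul,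
    add_zero, zero_add]
  rw [wCx, wDx]
lemma Px : Psum * ax = ax * Psum := by
  simp only [Psum, add_mul, mul_add, mul_assoc, zxx', zxx, mul_zero, zero_mul,
    add_zero, zero_add]
  rw [wPx]
lemma Sy : Ssum * ay = ay * Ssum := by
  simp only [Ssum, add_mul, mul_add, mul_assoc, zxx', zxz', zzx', zzz', zyy', zyw', zwy', zww', zxx, zxz, zzx, zzz, zyy, zyw, zwy, zww, mul_zero, zero_mul,
    add_zero, zero_add]
  rw [wB'y, wD'y]
lemma Py : Psum * ay = ay * Psum := by
  simp only [Psum, add_mul, mul_add, mul_assoc, zxx', zxz', zzx', zzz', zyy', zyw', zwy', zww', zxx, zxz, zzx, zzz, zyy, zyw, zwy, zww, mul_zero, zero_mul,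
    add_zero, zero_add]
  rw [wPy]
lemma Sz : Ssum * az = az * Ssum := by
  simp only [Ssum, add_mul, mul_add, mul_assoc, zxx', zxz', zzx', zzz', zyy', zyw', zwy', zww', zxx, zxz, zzx, zzz, zyy, zyw, zwy, zww, mul_zero, zero_mul,
    add_zero, zero_add]
  rw [wAz, wBz]
lemma Pz : Psum * az = az * Psum := by
  simp only [Psum, add_mul, mul_add, mul_assoc, zxx', zxz', zzx', zzz', zyy', zyw', zwy', zww', zxx, zxz, zzx, zzz, zyy, zyw, zwy, zww, mul_zero, zero_mul,
    add_zero, zero_add]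
  rw [wPz]
lemma Sw : Ssum * aw = aw * Ssum := by
  simp only [Ssum, add_mul, mul_add, mul_assoc, zxx', zxz', zzx', zzz', zyy', zyw', zwy', zww', zxx, zxz, zzx, zzz, zyy, zyw, zwy, zww, mul_zero, zero_mul,
    add_zero, zero_add]
  rw [wA'w, wC'w]
lemma Pw : Psum * aw = aw * Psum := by
  simp only [Psum, add_mul, mul_add, mul_assoc, zxx', zxz', zzx', zzz', zyy', zyw', zwy', zww', zxx, zxz, zzx, zzz, zyy, zyw, zwy, zww, mul_zero, zero_mul,
    add_zero, zero_add]
  rw [wPw]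
lemma Se1 : Ssum * e1A = e1A * Ssum := by
  simp only [Ssum, add_mul, mul_add, mul_assoc, yE1, wE1, xE1, zE1,
    E1x', E1z', E1y', E1w', mul_zero, zero_mul, add_zero, zero_add]
lemma Pe1 : Psum * e1A = e1A * Psum := by
  simp only [Psum, add_mul, mul_add, mul_assoc, yE1, wE1, xE1, zE1,
    E1x', E1z', E1y', E1w', mul_zero, zero_mul, add_zero, zero_add]
lemma Se2 : Ssum * e2A = e2A * Ssum := by
  simp only [Ssum, add_mul, mul_add, mul_assoc, yE2, wE2, xE2, zE2,
    E2x', E2z', E2y', E2w', mul_zero, zero_mul, add_zero, zero_add]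
lemma Pe2 : Psum * e2A = e2A * Psum := by
  simp only [Psum, add_mul, mul_add, mul_assoc, yE2, wE2, xE2, zE2,
    E2x', E2z', E2y', E2w', mul_zero, zero_mul, add_zero, zero_add]

end Aux3
lemma W0_comm_gen (q : ℂ) {u : ConifoldAlg} (hS : Ssum * u = u * Ssum)
    (hP : Psum * u = u * Psum) : W0 q * u = u * W0 q := by
  have key : ∀ (c : ℂ) (s : ConifoldAlg), s * u = u * s →
      (algebraMap ℂ ConifoldAlg c * s) * u = u * (algebraMap ℂ ConifoldAlg c * s) := by
    intro c s hs
    rw [mul_assoc, hs, ← mul_assoc, Algebra.commutes, mul_assoc]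
  have hW : W0 q = algebraMap ℂ ConifoldAlg (phiSeries q) * Ssum
      + algebraMap ℂ ConifoldAlg (psiSeries q) * Psum := rfl
  rw [hW, add_mul, mul_add, key _ _ hS, key _ _ hP]

theorem W0_central' (q : ℂ) (r : ConifoldAlg) : W0 q * r = r * W0 q := by
  obtain ⟨a, rfl⟩ := RingQuot.mkAlgHom_surjective ℂ ConifoldRel r
  induction a using FreeAlgebra.induction with
  | grade0 c => rw [AlgHom.commutes]; exact (Algebra.commutes c (W0 q)).symm
  | grade1 i =>
    fin_cases i
    · exact W0_comm_gen q Se1 Pe1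
    · exact W0_comm_gen q Se2 Pe2
    · exact W0_comm_gen q Sx Px
    · exact W0_comm_gen q Sy Py
    · exact W0_comm_gen q Sz Pz
    · exact W0_comm_gen q Sw Pw
  | mul a b ha hb => rw [map_mul, ← mul_assoc, ha, mul_assoc, hb, ← mul_assoc]
  | add a b ha hb => rw [map_add, mul_add, add_mul, ha, hb]

/-- for every `q` with `0 < |q| < 1`, the worldsheet superpotential `W₀`
is central in `A₀`. -/
theorem W0_central (q : ℂ) (h0 : 0 < ‖q‖) (h1 : ‖q‖ < 1)
    (r : ConifoldAlg) :
    W0 q * r = r * W0 q := by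
  exact W0_central' q r
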